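/- (Corollary 2, part 1, of the paper.) Under Assumptions 1 and 2, let b ∈ ℝ^K, α ∈ (0,1), and γ ∈ (0,1). If Q(b) ≥ C(γ), then ℙ(T_n(b) > q_{1−α}) ≥ γ. -/

import Mathlib

open MeasureTheory ProbabilityTheory

/-- Sample upper moment `m̂_u(b,v)` computed from outcomes `y`. -/
noncomputable def muHatU {n K : ℕ} (X : Fin n → Fin K → ℝ) (b v : Fin K → ℝ)
    (y : Fin n → ℝ) : ℝ :=
  (n : ℝ)⁻¹ * ∑ i, (2 * y i - 1) *
    (if 0 ≤ (∑ j, X i j * b j) ∧ (∑ j, X i j * v j) < 0 then 1 else 0)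

/-- Sample lower moment `m̂_l(b,v)` computed from outcomes `y`. -/
noncomputable def muHatL {n K : ℕ} (X : Fin n → Fin K → ℝ) (b v : Fin K → ℝ)
    (y : Fin n → ℝ) : ℝ :=
  (n : ℝ)⁻¹ * ∑ i, (1 - 2 * y i) *
    (if (∑ j, X i j * b j) ≤ 0 ∧ 0 < (∑ j, X i j * v j) then 1 else 0)

/-- Sample variance `σ̂_u²(b,v)`. -/
noncomputable def sigHatU2 {n K : ℕ} (X : Fin n → Fin K → ℝ) (b v : Fin K → ℝ)
    (y : Fin n → ℝ) : ℝ :=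
  (n : ℝ)⁻¹ * (∑ i, (if 0 ≤ (∑ j, X i j * b j) ∧ (∑ j, X i j * v j) < 0
      then (1:ℝ) else 0)) - (muHatU X b v y) ^ 2

/-- Sample variance `σ̂_l²(b,v)`. -/
noncomputable def sigHatL2 {n K : ℕ} (X : Fin n → Fin K → ℝ) (b v : Fin K → ℝ)
    (y : Fin n → ℝ) : ℝ :=
  (n : ℝ)⁻¹ * (∑ i, (if (∑ j, X i j * b j) ≤ 0 ∧ 0 < (∑ j, X i j * v j)
      then (1:ℝ) else 0)) - (muHatL X b v y) ^ 2

/-- The test statistic `T_n(b)` computed from outcomes `y`. -/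
noncomputable def Tstat {n K : ℕ} (X : Fin n → Fin K → ℝ)
    (Vu Vl : Finset (Fin K → ℝ)) (hu : Vu.Nonempty) (hl : Vl.Nonempty)
    (ε : ℝ) (b : Fin K → ℝ) (y : Fin n → ℝ) : ℝ :=
  max 0 (max
    (Vu.sup' hu fun v =>
      Real.sqrt n * (-(muHatU X b v y)) /
        max (Real.sqrt (sigHatU2 X b v y)) ε)
    (Vl.sup' hl fun v =>
      Real.sqrt n * (-(muHatL X b v y)) /
        max (Real.sqrt (sigHatL2 X b v y)) ε))


/-- Hoeffding's lemma for a Bernoulli random variable. -/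
lemma bern (p : ℝ) (hp0 : 0 ≤ p) (hp1 : p ≤ 1) (t : ℝ) :
    p * Real.exp t + (1 - p) ≤ Real.exp (t * p + t ^ 2 / 8) := by
  set D : ℝ → ℝ := fun x => p * Real.exp x + (1 - p) with hD
  have hDpos : ∀ x, 0 < D x := by
    intro x
    rcases eq_or_lt_of_le hp0 with h | h
    · simp [hD, ← h]
    · have := mul_pos h (Real.exp_pos x)
      simp only [hD]
      nlinarith
  have hDderiv : ∀ x, HasDerivAt D (p * Real.exp x) x := by
    intro x
    exact ((Real.hasDerivAt_exp x).const_mul p).add_const (1 - p)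
  set g : ℝ → ℝ := fun x => p + x / 4 - p * Real.exp x / D x with hg
  have hgderiv : ∀ x, HasDerivAt g
      (1 / 4 - (p * Real.exp x * D x - p * Real.exp x * (p * Real.exp x)) / (D x) ^ 2) x := by
    intro x
    have h1 : HasDerivAt (fun x => p + x / 4) (1 / 4) x := by
      simpa using ((hasDerivAt_id x).div_const 4).const_add p
    have h2 : HasDerivAt (fun x => p * Real.exp x / D x)
        ((p * Real.exp x * D x - p * Real.exp x * (p * Real.exp x)) / (D x) ^ 2) x :=
      ((Real.hasDerivAt_exp x).const_mul p).div (hDderiv x) (hDpos x).ne'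
    exact h1.sub h2
  have hgnonneg : ∀ x, 0 ≤ 1 / 4 -
      (p * Real.exp x * D x - p * Real.exp x * (p * Real.exp x)) / (D x) ^ 2 := by
    intro x
    rw [sub_nonneg, div_le_iff₀ (pow_pos (hDpos x) 2)]
    have hE := Real.exp_pos x
    simp only [hD]
    nlinarith [sq_nonneg (p * Real.exp x - (1 - p)), mul_nonneg hp0 hE.le]
  have hgmono : Monotone g :=
    monotone_of_deriv_nonneg (fun x => (hgderiv x).differentiableAt)
      (fun x => by rw [(hgderiv x).deriv]; exact hgnonneg x)
  have hg0 : g 0 = 0 := by simp [hg, hD]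
  set L : ℝ → ℝ := fun x => x * p + x ^ 2 / 8 - Real.log (D x) with hL
  have hLderiv : ∀ x, HasDerivAt L (g x) x := by
    intro x
    have h1 : HasDerivAt (fun x : ℝ => x * p + x ^ 2 / 8) (p + x / 4) x := by
      have h0 : HasDerivAt (fun y : ℝ => y * p) p x := by
        simpa using (hasDerivAt_id x).mul_const p
      have := h0.add ((hasDerivAt_pow 2 x).div_const 8)
      exact this.congr_deriv (by norm_num; ring)
    have h2 : HasDerivAt (fun x => Real.log (D x)) (p * Real.exp x / D x) x :=
      (hDderiv x).log (hDpos x).ne'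
    exact h1.sub h2
  have hL0 : L 0 = 0 := by simp [hL, hD]
  have key : ∀ x, 0 ≤ L x := by
    intro x
    rcases le_total 0 x with hx | hx
    · have hmono : MonotoneOn L (Set.Ici (0 : ℝ)) := by
        apply monotoneOn_of_hasDerivWithinAt_nonneg (convex_Ici 0)
          (fun y _ => ((hLderiv y).differentiableAt.continuousAt).continuousWithinAt)
          (fun y _ => (hLderiv y).hasDerivWithinAt)
        intro y hy
        rw [interior_Ici] at hy
        have : g 0 ≤ g y := hgmono (le_of_lt hy)
        linarith [hg0 ▸ this]
      have := hmono (Set.self_mem_Ici) (Set.mem_Ici.mpr hx) hx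
      linarith [hL0 ▸ this]
    · have hmono : AntitoneOn L (Set.Iic (0 : ℝ)) := by
        apply antitoneOn_of_hasDerivWithinAt_nonpos (convex_Iic 0)
          (fun y _ => ((hLderiv y).differentiableAt.continuousAt).continuousWithinAt)
          (fun y _ => (hLderiv y).hasDerivWithinAt)
        intro y hy
        rw [interior_Iic] at hy
        have : g y ≤ g 0 := hgmono (le_of_lt hy)
        linarith [hg0 ▸ this]
      have := hmono (Set.mem_Iic.mpr hx) (Set.self_mem_Iic) hx
      linarith [hL0 ▸ this]
  have hlog : Real.log (D t) ≤ t * p + t ^ 2 / 8 := by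
    have := key t
    simp only [hL] at this
    linarith
  calc p * Real.exp t + (1 - p) = D t := rfl
    _ ≤ Real.exp (t * p + t ^ 2 / 8) := by
        rw [← Real.exp_log (hDpos t)]
        exact Real.exp_le_exp.mpr hlog

/-- A function equal to `a` on a measurable set `S` and to `b` off `S` is integrable with
integral `a * P S + b * (1 - P S)`. -/
lemma twoval {Ω : Type*} [MeasurableSpace Ω] (P : Measure Ω) [IsProbabilityMeasure P]
    (f : Ω → ℝ) (S : Set Ω) (hS : MeasurableSet S) (a b : ℝ)
    (ha : ∀ ω ∈ S, f ω = a) (hb : ∀ ω ∉ S, f ω = b) :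
    Integrable f P ∧ ∫ ω, f ω ∂P = a * (P S).toReal + b * (1 - (P S).toReal) := by
  have hfeq : f = fun ω => S.indicator (fun _ => a) ω + Sᶜ.indicator (fun _ => b) ω := by
    funext ω
    by_cases h : ω ∈ S
    · simp [Set.indicator_of_mem, Set.indicator_of_notMem, h, ha ω h]
    · simp [Set.indicator_of_mem, Set.indicator_of_notMem, h, hb ω h]
  have hia : Integrable (S.indicator (fun _ => a)) P :=
    (integrable_const a).indicator hS
  have hib : Integrable (Sᶜ.indicator (fun _ => b)) P :=
    (integrable_const b).indicator hS.compl
  have hPc : (P Sᶜ).toReal = 1 - (P S).toReal := by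
    rw [measure_compl hS (measure_ne_top _ _), measure_univ,
      ENNReal.toReal_sub_of_le prob_le_one ENNReal.one_ne_top, ENNReal.toReal_one]
  constructor
  · rw [hfeq]; exact hia.add hib
  · rw [hfeq, integral_add hia hib, integral_indicator_const _ hS,
      integral_indicator_const _ hS.compl, measureReal_def, measureReal_def, hPc]
    simp [mul_comm]

/-- Hoeffding-type concentration for independent `±c i`-valued random variables. -/
lemma conc {Ω : Type*} [MeasurableSpace Ω] (P : Measure Ω) [IsProbabilityMeasure P] {n : ℕ}
    (W : Fin n → Ω → ℝ) (hmeas : ∀ i, Measurable (W i))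
    (hind : iIndepFun W P)
    (c : Fin n → ℝ) (hc1 : ∀ i, |c i| ≤ 1)
    (hval : ∀ i ω, W i ω = c i ∨ W i ω = -c i)
    (s : ℝ) (hs : 0 < s) :
    (P {ω | (∑ i, ∫ ω', W i ω' ∂P) + n * s ≤ ∑ i, W i ω}).toReal
      ≤ Real.exp (-(n * s ^ 2 / 2)) := by
  classical
  set S : Fin n → Set Ω := fun i => {ω | W i ω = c i} with hSdef
  have hSm : ∀ i, MeasurableSet (S i) := fun i => (hmeas i) (measurableSet_singleton (c i))
  set p : Fin n → ℝ := fun i => (P (S i)).toReal with hpdef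
  have hp0 : ∀ i, 0 ≤ p i := fun i => ENNReal.toReal_nonneg
  have hp1 : ∀ i, p i ≤ 1 := by
    intro i
    have := prob_le_one (μ := P) (s := S i)
    simpa [hpdef] using ENNReal.toReal_mono (by simp) this
  -- integral of W i
  have hTW : ∀ i, Integrable (W i) P ∧
      ∫ ω, W i ω ∂P = c i * p i + (-c i) * (1 - p i) := by
    intro i
    exact twoval P (W i) (S i) (hSm i) (c i) (-c i)
      (fun ω hω => hω) (fun ω hω => (hval i ω).resolve_left hω)
  -- integral of exp (s * W i)
  have hTE : ∀ i, Integrable (fun ω => Real.exp (s * W i ω)) P ∧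
      ∫ ω, Real.exp (s * W i ω) ∂P
        = Real.exp (s * c i) * p i + Real.exp (s * -c i) * (1 - p i) := by
    intro i
    exact twoval P _ (S i) (hSm i) (Real.exp (s * c i)) (Real.exp (s * -c i))
      (fun ω hω => by rw [show W i ω = c i from hω])
      (fun ω hω => by rw [show W i ω = -c i from (hval i ω).resolve_left hω])
  -- mgf bound for each i
  have hmgf : ∀ i, mgf (W i) P s ≤ Real.exp (s * (∫ ω, W i ω ∂P) + s ^ 2 / 2) := by
    intro i
    have hb := bern (p i) (hp0 i) (hp1 i) (2 * s * c i)
    have hmul := mul_le_mul_of_nonneg_left hb (Real.exp_pos (s * -c i)).le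
    rw [mgf, (hTE i).2, (hTW i).2]
    calc Real.exp (s * c i) * p i + Real.exp (s * -c i) * (1 - p i)
        = Real.exp (s * -c i) * (p i * Real.exp (2 * s * c i) + (1 - p i)) := by
          have h3 : Real.exp (s * c i) = Real.exp (s * -c i) * Real.exp (2 * s * c i) := by
            rw [← Real.exp_add]; congr 1; ring
          rw [h3]; ring
      _ ≤ Real.exp (s * -c i) * Real.exp (2 * s * c i * p i + (2 * s * c i) ^ 2 / 8) := hmul
      _ ≤ Real.exp (s * (c i * p i + (-c i) * (1 - p i)) + s ^ 2 / 2) := by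
          rw [← Real.exp_add, Real.exp_le_exp]
          have hc2 : (c i) ^ 2 ≤ 1 := by
            have := hc1 i
            nlinarith [abs_nonneg (c i), sq_abs (c i)]
          nlinarith [sq_nonneg s]
  -- Chernoff
  set A : ℝ := (∑ i, ∫ ω', W i ω' ∂P) + n * s with hA
  have hintsum : Integrable (fun ω => Real.exp (s * (∑ i, W i) ω)) P :=
    hind.integrable_exp_mul_sum hmeas (fun i _ => (hTE i).1)
  have hch := measure_ge_le_exp_mul_mgf (μ := P) (X := ∑ i, W i) A hs.le hintsum
  have hset : {ω | A ≤ (∑ i, W i) ω} = {ω | A ≤ ∑ i, W i ω} := by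
    ext ω; simp [Finset.sum_apply]
  rw [hset] at hch
  refine hch.trans ?_
  rw [hind.mgf_sum hmeas]
  have hprod : ∏ i, mgf (W i) P s ≤ ∏ i, Real.exp (s * (∫ ω, W i ω ∂P) + s ^ 2 / 2) :=
    Finset.prod_le_prod (fun i _ => mgf_nonneg) (fun i _ => hmgf i)
  calc Real.exp (-s * A) * ∏ i, mgf (W i) P s
      ≤ Real.exp (-s * A) * ∏ i, Real.exp (s * (∫ ω, W i ω ∂P) + s ^ 2 / 2) := by
        exact mul_le_mul_of_nonneg_left hprod (Real.exp_pos _).le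
    _ = Real.exp (-s * A + ∑ i, (s * (∫ ω, W i ω ∂P) + s ^ 2 / 2)) := by
        rw [← Real.exp_sum, ← Real.exp_add]
    _ ≤ Real.exp (-(n * s ^ 2 / 2)) := by
        rw [Real.exp_le_exp, Finset.sum_add_distrib, ← Finset.mul_sum, Finset.sum_const]
        simp only [hA, Finset.card_univ, Fintype.card_fin, nsmul_eq_mul]
        ring_nf
        apply le_of_eq
        ring

/-- Lower bound on the probability that the sum stays below its mean plus `n s`. -/
lemma conc2 {Ω : Type*} [MeasurableSpace Ω] (P : Measure Ω) [IsProbabilityMeasure P] {n : ℕ}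
    (W : Fin n → Ω → ℝ) (hmeas : ∀ i, Measurable (W i))
    (hind : iIndepFun W P)
    (c : Fin n → ℝ) (hc1 : ∀ i, |c i| ≤ 1)
    (hval : ∀ i ω, W i ω = c i ∨ W i ω = -c i)
    (s γ : ℝ) (hs : 0 < s)
    (hexp : Real.exp (-(n * s ^ 2 / 2)) ≤ 1 - γ) :
    γ ≤ (P {ω | ∑ i, W i ω < (∑ i, ∫ ω', W i ω' ∂P) + n * s}).toReal := by
  set A : ℝ := (∑ i, ∫ ω', W i ω' ∂P) + n * s with hA
  have hsum : Measurable (fun ω => ∑ i, W i ω) := by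
    apply Finset.measurable_sum
    exact fun i _ => hmeas i
  have hF : MeasurableSet {ω | A ≤ ∑ i, W i ω} := measurableSet_le measurable_const hsum
  have hcompl : {ω | ∑ i, W i ω < A} = {ω | A ≤ ∑ i, W i ω}ᶜ := by
    ext ω; simp [not_le]
  have h1 : (P {ω | A ≤ ∑ i, W i ω}).toReal ≤ 1 - γ :=
    (conc P W hmeas hind c hc1 hval s hs).trans hexp
  rw [hcompl, measure_compl hF (measure_ne_top _ _), measure_univ,
    ENNReal.toReal_sub_of_le prob_le_one ENNReal.one_ne_top, ENNReal.toReal_one]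
  linarith

/-- The key deterministic inequality. -/
lemma key_ineq (n : ℕ) (hn : 1 ≤ n) (q ε a σ2 : ℝ) (hq : 0 ≤ q) (hε : 0 < ε)
    (hσ : σ2 ≤ 1 - a ^ 2)
    (ha : (Real.sqrt n)⁻¹ * (q * max ε (Real.sqrt (1 + q ^ 2 / n))⁻¹) < a) :
    q < Real.sqrt n * a / max (Real.sqrt σ2) ε := by
  have hnR : (0 : ℝ) < n := by exact_mod_cast hn
  have hrn : (0 : ℝ) < Real.sqrt n := Real.sqrt_pos.mpr hnR
  have hrn2 : Real.sqrt n ^ 2 = n := Real.sq_sqrt hnR.le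
  set t : ℝ := Real.sqrt (1 + q ^ 2 / n) with ht
  have htpos : 0 < t := Real.sqrt_pos.mpr (by positivity)
  have ht2 : t ^ 2 = 1 + q ^ 2 / n := Real.sq_sqrt (by positivity)
  set M : ℝ := max ε t⁻¹ with hM
  have hMε : ε ≤ M := le_max_left _ _
  have hMt : t⁻¹ ≤ M := le_max_right _ _
  have hMpos : 0 < M := lt_of_lt_of_le hε hMε
  have hapos : 0 < a := lt_of_le_of_lt (by positivity) ha
  set d : ℝ := max (Real.sqrt σ2) ε with hd
  have hdpos : 0 < d := lt_of_lt_of_le hε (le_max_right _ _)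
  rw [lt_div_iff₀ hdpos]
  have hqd : q * d = max (q * Real.sqrt σ2) (q * ε) := mul_max_of_nonneg _ _ hq
  rw [mul_comm (Real.sqrt n) a]
  rw [hqd]
  apply max_lt
  · -- q * sqrt σ2 < a * sqrt n
    have hq2 : q ^ 2 * (1 - a ^ 2) < n * a ^ 2 := by
      have h1 : (Real.sqrt n)⁻¹ * (q * t⁻¹) ≤ (Real.sqrt n)⁻¹ * (q * M) := by
        apply mul_le_mul_of_nonneg_left (mul_le_mul_of_nonneg_left hMt hq) (by positivity)
      have h2 : (Real.sqrt n)⁻¹ * (q * t⁻¹) < a := lt_of_le_of_lt h1 ha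
      have h3 : q < a * (Real.sqrt n * t) := by
        have hpos : (0:ℝ) < Real.sqrt n * t := by positivity
        have hml := mul_lt_mul_of_pos_right h2 hpos
        calc q = (Real.sqrt n)⁻¹ * (q * t⁻¹) * (Real.sqrt n * t) := by
                field_simp
          _ < a * (Real.sqrt n * t) := hml
      have h4 : q ^ 2 < a ^ 2 * (n * (1 + q ^ 2 / n)) := by
        have hsq := mul_lt_mul'' h3 h3 hq hq
        calc q ^ 2 = q * q := sq q
          _ < a * (Real.sqrt n * t) * (a * (Real.sqrt n * t)) := hsq
          _ = a ^ 2 * (Real.sqrt n ^ 2 * t ^ 2) := by ring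
          _ = a ^ 2 * (n * (1 + q ^ 2 / n)) := by rw [hrn2, ht2]
      have h5 : n * (1 + q ^ 2 / n) = n + q ^ 2 := by field_simp
      nlinarith [h4, h5]
    have hs2 : Real.sqrt σ2 ^ 2 ≤ max 0 (1 - a ^ 2) := by
      rcases le_or_gt σ2 0 with h | h
      · rw [Real.sqrt_eq_zero_of_nonpos h]; simpa using le_max_left _ _
      · rw [Real.sq_sqrt h.le]; exact le_max_of_le_right hσ
    have hlhs : (q * Real.sqrt σ2) ^ 2 < (a * Real.sqrt n) ^ 2 := by
      have h6 : (q * Real.sqrt σ2) ^ 2 ≤ q ^ 2 * max 0 (1 - a ^ 2) := by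
        rw [mul_pow]
        exact mul_le_mul_of_nonneg_left hs2 (sq_nonneg q)
      have h7 : q ^ 2 * max 0 (1 - a ^ 2) < n * a ^ 2 := by
        rcases max_cases (0 : ℝ) (1 - a ^ 2) with ⟨hmx, _⟩ | ⟨hmx, _⟩
        · rw [hmx, mul_zero]; positivity
        · rw [hmx]; exact hq2
      calc (q * Real.sqrt σ2) ^ 2 ≤ q ^ 2 * max 0 (1 - a ^ 2) := h6
        _ < n * a ^ 2 := h7
        _ = (a * Real.sqrt n) ^ 2 := by rw [mul_pow, hrn2]; ring
    exact lt_of_pow_lt_pow_left₀ 2 (by positivity) hlhs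
  · -- q * ε < a * sqrt n
    have h1 : q * ε ≤ q * M := mul_le_mul_of_nonneg_left hMε hq
    have h2 : Real.sqrt n * ((Real.sqrt n)⁻¹ * (q * M)) < Real.sqrt n * a :=
      mul_lt_mul_of_pos_left ha hrn
    rw [← mul_assoc, mul_inv_cancel₀ hrn.ne', one_mul] at h2
    calc q * ε ≤ q * M := h1
      _ < Real.sqrt n * a := h2
      _ = a * Real.sqrt n := mul_comm _ _

/-- The common argument for the upper/lower branch. -/
lemma branch {Ω : Type*} [MeasurableSpace Ω] (P : Measure Ω) [IsProbabilityMeasure P]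
    {n : ℕ} (hn : 1 ≤ n)
    (W : Fin n → Ω → ℝ) (hmeas : ∀ i, Measurable (W i))
    (hind : iIndepFun W P)
    (c : Fin n → ℝ) (hc1 : ∀ i, |c i| ≤ 1)
    (hval : ∀ i ω, W i ω = c i ∨ W i ω = -c i)
    (m σ2 T : Ω → ℝ)
    (hm : ∀ ω, m ω = (n : ℝ)⁻¹ * ∑ i, W i ω)
    (hσ : ∀ ω, σ2 ω ≤ 1 - (m ω) ^ 2)
    (ε : ℝ) (hε : 0 < ε)
    (hT : ∀ ω, Real.sqrt n * (-(m ω)) / max (Real.sqrt (σ2 ω)) ε ≤ T ω)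
    (q γ Q : ℝ) (hq0 : 0 ≤ q) (hγ : γ ∈ Set.Ioo (0 : ℝ) 1)
    (hEm : ∫ ω, m ω ∂P = -Q)
    (hQb : (Real.sqrt n)⁻¹ * (q * max ε (Real.sqrt (1 + q ^ 2 / n))⁻¹
        + Real.sqrt (-(2 * Real.log (1 - γ)))) ≤ Q) :
    γ ≤ (P {ω | q < T ω}).toReal := by
  obtain ⟨hγ0, hγ1⟩ := hγ
  have hnR : (0 : ℝ) < n := by exact_mod_cast hn
  have hrn : (0 : ℝ) < Real.sqrt n := Real.sqrt_pos.mpr hnR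
  have hrn2 : Real.sqrt n ^ 2 = (n : ℝ) := Real.sq_sqrt hnR.le
  set L : ℝ := -(2 * Real.log (1 - γ)) with hLdef
  have hLpos : 0 < L := by
    have := Real.log_neg (show (0:ℝ) < 1 - γ by linarith) (by linarith)
    simp only [hLdef]; linarith
  set s : ℝ := (Real.sqrt n)⁻¹ * Real.sqrt L with hsdef
  have hs : 0 < s := mul_pos (inv_pos.mpr hrn) (Real.sqrt_pos.mpr hLpos)
  have hint : ∀ i, Integrable (W i) P := fun i =>
    (twoval P (W i) {ω | W i ω = c i} ((hmeas i) (measurableSet_singleton _)) (c i) (-c i)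
      (fun ω h => h) (fun ω h => (hval i ω).resolve_left h)).1
  have hEsum : (∑ i, ∫ ω', W i ω' ∂P) = n * (-Q) := by
    have h1 : ∫ ω, m ω ∂P = (n : ℝ)⁻¹ * ∑ i, ∫ ω', W i ω' ∂P := by
      simp_rw [hm]
      rw [integral_const_mul, integral_finset_sum _ (fun i _ => hint i)]
    rw [hEm] at h1
    field_simp at h1
    linarith
  have hs2 : s ^ 2 = L / n := by
    rw [hsdef, mul_pow, Real.sq_sqrt hLpos.le, inv_pow, hrn2]
    ring
  have hexp : Real.exp (-(n * s ^ 2 / 2)) ≤ 1 - γ := by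
    have harg : -((n : ℝ) * s ^ 2 / 2) = Real.log (1 - γ) := by
      rw [hs2]
      field_simp
      simp only [hLdef]
      ring
    rw [harg, Real.exp_log (by linarith)]
  have hP := conc2 P W hmeas hind c hc1 hval s γ hs hexp
  have hsub : {ω | ∑ i, W i ω < (∑ i, ∫ ω', W i ω' ∂P) + n * s} ⊆ {ω | q < T ω} := by
    intro ω hω
    simp only [Set.mem_setOf_eq] at hω ⊢
    have hmω : m ω < -Q + s := by
      rw [hm ω]
      calc (n : ℝ)⁻¹ * ∑ i, W i ω
          < (n : ℝ)⁻¹ * ((∑ i, ∫ ω', W i ω' ∂P) + n * s) :=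
            mul_lt_mul_of_pos_left hω (inv_pos.mpr hnR)
        _ = -Q + s := by rw [hEsum]; field_simp
    have ha : (Real.sqrt n)⁻¹ * (q * max ε (Real.sqrt (1 + q ^ 2 / n))⁻¹) < -(m ω) := by
      have hsplit : (Real.sqrt n)⁻¹ * (q * max ε (Real.sqrt (1 + q ^ 2 / n))⁻¹ + Real.sqrt L)
          = (Real.sqrt n)⁻¹ * (q * max ε (Real.sqrt (1 + q ^ 2 / n))⁻¹) + s := by
        rw [hsdef]; ring
      rw [hsplit] at hQb
      linarith
    have hσ' : σ2 ω ≤ 1 - (-(m ω)) ^ 2 := by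
      have := hσ ω; simpa [neg_sq] using this
    have hk := key_ineq n hn q ε (-(m ω)) (σ2 ω) hq0 hε hσ' ha
    exact lt_of_lt_of_le hk (hT ω)
  calc γ ≤ (P {ω | ∑ i, W i ω < (∑ i, ∫ ω', W i ω' ∂P) + n * s}).toReal := hP
    _ ≤ (P {ω | q < T ω}).toReal :=
        ENNReal.toReal_mono (measure_ne_top _ _) (measure_mono hsub)

lemma Tstat_nonneg {n K : ℕ} (X : Fin n → Fin K → ℝ)
    (Vu Vl : Finset (Fin K → ℝ)) (hu : Vu.Nonempty) (hl : Vl.Nonempty)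
    (ε : ℝ) (b : Fin K → ℝ) (y : Fin n → ℝ) : 0 ≤ Tstat X Vu Vl hu hl ε b y :=
  le_max_left _ _

/-- Corollary 2, part 1: under Assumptions 1 and 2, if `Q(b) ≥ C(γ)` then
`P(T_n(b) > q_{1−α}) ≥ γ`. -/
theorem corollary2_part1
    {Ω : Type*} [MeasurableSpace Ω] (P : Measure Ω) [IsProbabilityMeasure P]
    {n K : ℕ} (hn : 1 ≤ n) (hK : 1 ≤ K)
    (X : Fin n → Fin K → ℝ) (β : Fin K → ℝ)
    (U : Fin n → Ω → ℝ) (hU : ∀ i, Measurable (U i))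
    (Y : Fin n → Ω → ℝ)
    (hY : ∀ i ω, Y i ω = if 0 ≤ (∑ j, X i j * β j) + U i ω then 1 else 0)
    (hmed : ∀ i, P {ω | 0 ≤ U i ω} = 1/2)
    (hindep : iIndepFun
      (fun i ω => if 0 ≤ U i ω then (1 : ℝ) else 0) P)
    (hindepU : iIndepFun U P)
    (ε : ℝ) (hε : 0 < ε)
    (Vu Vl : Finset (Fin K → ℝ)) (hu : Vu.Nonempty) (hl : Vl.Nonempty)
    (b : Fin K → ℝ) (α γ : ℝ) (hα : α ∈ Set.Ioo (0 : ℝ) 1) (hγ : γ ∈ Set.Ioo (0 : ℝ) 1)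
    (q : ℝ)
    (hq : q = sInf {c : ℝ | 1 - α ≤
      (P {ω | Tstat X Vu Vl hu hl ε b
          (fun i => if 0 ≤ U i ω then 1 else 0) ≤ c}).toReal})
    (Q : ℝ)
    (hQ : Q = max
      (-(min 0 (Vu.inf' hu fun v => ∫ ω, muHatU X b v (fun i => Y i ω) ∂P)))
      (-(min 0 (Vl.inf' hl fun v => ∫ ω, muHatL X b v (fun i => Y i ω) ∂P))))
    (C : ℝ)
    (hC : C = (Real.sqrt n)⁻¹ *
      (q * max ε (Real.sqrt (1 + q ^ 2 / n))⁻¹ + Real.sqrt (-(2 * Real.log (1 - γ)))))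
    (hQC : C ≤ Q) :
    γ ≤ (P {ω | q < Tstat X Vu Vl hu hl ε b (fun i => Y i ω)}).toReal := by
  obtain ⟨hα0, hα1⟩ := hα
  obtain ⟨hγ0, hγ1⟩ := hγ
  have hnR : (0 : ℝ) < n := by exact_mod_cast hn
  have hrn : (0 : ℝ) < Real.sqrt n := Real.sqrt_pos.mpr hnR
  -- q is nonnegative
  have hq0 : 0 ≤ q := by
    rw [hq]
    apply Real.sInf_nonneg
    intro cc hcc
    by_contra hneg
    push_neg at hneg
    have hempty : {ω | Tstat X Vu Vl hu hl ε b
        (fun i => if 0 ≤ U i ω then (1:ℝ) else 0) ≤ cc} = ∅ := by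
      ext ω
      simp only [Set.mem_setOf_eq, Set.mem_empty_iff_false, iff_false, not_le]
      exact lt_of_lt_of_le hneg (Tstat_nonneg _ _ _ _ _ _ _ _)
    rw [Set.mem_setOf_eq, hempty] at hcc
    simp only [measure_empty, ENNReal.toReal_zero] at hcc
    linarith
  -- C is positive
  have hS0pos : 0 < Real.sqrt (-(2 * Real.log (1 - γ))) := by
    apply Real.sqrt_pos.mpr
    have := Real.log_neg (show (0:ℝ) < 1 - γ by linarith) (by linarith)
    linarith
  have hCpos : 0 < C := by
    rw [hC]
    apply mul_pos (inv_pos.mpr hrn)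
    have hM : (0:ℝ) < max ε (Real.sqrt (1 + q ^ 2 / n))⁻¹ := lt_of_lt_of_le hε (le_max_left _ _)
    nlinarith [mul_nonneg hq0 hM.le]
  have hQpos : 0 < Q := lt_of_lt_of_le hCpos hQC
  rw [hC] at hQC
  -- measurability of Y
  have hYm : ∀ i, Measurable (Y i) := by
    intro i
    have hYe : Y i = fun ω => if 0 ≤ (∑ j, X i j * β j) + U i ω then (1:ℝ) else 0 :=
      funext (hY i)
    rw [hYe]
    exact Measurable.ite (measurableSet_le measurable_const (measurable_const.add (hU i)))
      measurable_const measurable_const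
  set FU : (Fin K → ℝ) → ℝ := fun v => ∫ ω, muHatU X b v (fun i => Y i ω) ∂P with hFU
  set FL : (Fin K → ℝ) → ℝ := fun v => ∫ ω, muHatL X b v (fun i => Y i ω) ∂P with hFL
  rcases le_total (-(min 0 (Vl.inf' hl FL))) (-(min 0 (Vu.inf' hu FU))) with hcase | hcase
  · -- upper branch
    have hQU : Q = -(min 0 (Vu.inf' hu FU)) := by rw [hQ]; exact max_eq_left hcase
    rcases min_cases (0:ℝ) (Vu.inf' hu FU) with ⟨h1, _⟩ | ⟨h1, _⟩
    · rw [h1] at hQU; simp at hQU; linarith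
    · obtain ⟨v, hv, hvEq⟩ := Finset.exists_mem_eq_inf' hu FU
      have hEm : FU v = -Q := by rw [← hvEq, ← h1]; linarith [hQU]
      set c : Fin n → ℝ := fun i =>
        if 0 ≤ (∑ j, X i j * b j) ∧ (∑ j, X i j * v j) < 0 then (1:ℝ) else 0 with hcdef
      set W : Fin n → Ω → ℝ := fun i ω => (2 * Y i ω - 1) * c i with hWdef
      have hmeas : ∀ i, Measurable (W i) :=
        fun i => (((hYm i).const_mul 2).sub measurable_const).mul_const (c i)
      have hind : iIndepFun W P := by
        have hWg : W = fun i => (fun u : ℝ =>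
            (2 * (if 0 ≤ (∑ j, X i j * β j) + u then (1:ℝ) else 0) - 1) * c i) ∘ U i := by
          funext i ω
          simp only [hWdef, Function.comp_apply, hY i ω]
        rw [hWg]
        exact hindepU.comp _ (fun i =>
          (((Measurable.ite (measurableSet_le measurable_const
            (measurable_const.add measurable_id)) measurable_const
              measurable_const).const_mul 2).sub measurable_const).mul_const (c i))
      have hc1 : ∀ i, |c i| ≤ 1 := by
        intro i; simp only [hcdef]; split <;> norm_num
      have hval : ∀ i ω, W i ω = c i ∨ W i ω = -c i := by
        intro i ω
        by_cases hy : 0 ≤ (∑ j, X i j * β j) + U i ω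
        · left; simp only [hWdef, hY i ω, if_pos hy]; ring
        · right; simp only [hWdef, hY i ω, if_neg hy]; ring
      have hm : ∀ ω, muHatU X b v (fun i => Y i ω) = (n : ℝ)⁻¹ * ∑ i, W i ω :=
        fun ω => rfl
      have hσ : ∀ ω, sigHatU2 X b v (fun i => Y i ω)
          ≤ 1 - (muHatU X b v (fun i => Y i ω)) ^ 2 := by
        intro ω
        have hsum : (∑ i : Fin n, (if 0 ≤ (∑ j, X i j * b j) ∧ (∑ j, X i j * v j) < 0
            then (1:ℝ) else 0)) ≤ n := by
          calc (∑ i : Fin n, (if 0 ≤ (∑ j, X i j * b j) ∧ (∑ j, X i j * v j) < 0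
              then (1:ℝ) else 0)) ≤ ∑ _i : Fin n, (1:ℝ) :=
                Finset.sum_le_sum (fun i _ => by split <;> norm_num)
            _ = n := by simp
        have h2 : (n:ℝ)⁻¹ * (∑ i : Fin n, (if 0 ≤ (∑ j, X i j * b j) ∧
            (∑ j, X i j * v j) < 0 then (1:ℝ) else 0)) ≤ 1 := by
          rw [inv_mul_le_iff₀ hnR, mul_one]
          exact hsum
        simp only [sigHatU2]
        linarith
      have hT : ∀ ω, Real.sqrt n * (-(muHatU X b v (fun i => Y i ω))) /
          max (Real.sqrt (sigHatU2 X b v (fun i => Y i ω))) ε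
            ≤ Tstat X Vu Vl hu hl ε b (fun i => Y i ω) := by
        intro ω
        refine le_trans ?_ (le_trans (le_max_left _ _) (le_max_right _ _))
        exact Finset.le_sup' (fun v => Real.sqrt n * (-(muHatU X b v (fun i => Y i ω))) /
          max (Real.sqrt (sigHatU2 X b v (fun i => Y i ω))) ε) hv
      exact branch P hn W hmeas hind c hc1 hval
        (fun ω => muHatU X b v (fun i => Y i ω))
        (fun ω => sigHatU2 X b v (fun i => Y i ω))
        (fun ω => Tstat X Vu Vl hu hl ε b (fun i => Y i ω))
        hm hσ ε hε hT q γ Q hq0 ⟨hγ0, hγ1⟩ hEm hQC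
  · -- lower branch
    have hQL : Q = -(min 0 (Vl.inf' hl FL)) := by rw [hQ]; exact max_eq_right hcase
    rcases min_cases (0:ℝ) (Vl.inf' hl FL) with ⟨h1, _⟩ | ⟨h1, _⟩
    · rw [h1] at hQL; simp at hQL; linarith
    · obtain ⟨v, hv, hvEq⟩ := Finset.exists_mem_eq_inf' hl FL
      have hEm : FL v = -Q := by rw [← hvEq, ← h1]; linarith [hQL]
      set c : Fin n → ℝ := fun i =>
        if (∑ j, X i j * b j) ≤ 0 ∧ 0 < (∑ j, X i j * v j) then (1:ℝ) else 0 with hcdef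
      set W : Fin n → Ω → ℝ := fun i ω => (1 - 2 * Y i ω) * c i with hWdef
      have hmeas : ∀ i, Measurable (W i) :=
        fun i => (measurable_const.sub ((hYm i).const_mul 2)).mul_const (c i)
      have hind : iIndepFun W P := by
        have hWg : W = fun i => (fun u : ℝ =>
            (1 - 2 * (if 0 ≤ (∑ j, X i j * β j) + u then (1:ℝ) else 0)) * c i) ∘ U i := by
          funext i ω
          simp only [hWdef, Function.comp_apply, hY i ω]
        rw [hWg]
        exact hindepU.comp _ (fun i =>
          ((measurable_const.sub ((Measurable.ite (measurableSet_le measurable_const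
            (measurable_const.add measurable_id)) measurable_const
              measurable_const).const_mul 2)).mul_const (c i)))
      have hc1 : ∀ i, |c i| ≤ 1 := by
        intro i; simp only [hcdef]; split <;> norm_num
      have hval : ∀ i ω, W i ω = c i ∨ W i ω = -c i := by
        intro i ω
        by_cases hy : 0 ≤ (∑ j, X i j * β j) + U i ω
        · right; simp only [hWdef, hY i ω, if_pos hy]; ring
        · left; simp only [hWdef, hY i ω, if_neg hy]; ring
      have hm : ∀ ω, muHatL X b v (fun i => Y i ω) = (n : ℝ)⁻¹ * ∑ i, W i ω :=
        fun ω => rfl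
      have hσ : ∀ ω, sigHatL2 X b v (fun i => Y i ω)
          ≤ 1 - (muHatL X b v (fun i => Y i ω)) ^ 2 := by
        intro ω
        have hsum : (∑ i : Fin n, (if (∑ j, X i j * b j) ≤ 0 ∧ 0 < (∑ j, X i j * v j)
            then (1:ℝ) else 0)) ≤ n := by
          calc (∑ i : Fin n, (if (∑ j, X i j * b j) ≤ 0 ∧ 0 < (∑ j, X i j * v j)
              then (1:ℝ) else 0)) ≤ ∑ _i : Fin n, (1:ℝ) :=
                Finset.sum_le_sum (fun i _ => by split <;> norm_num)
            _ = n := by simp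
        have h2 : (n:ℝ)⁻¹ * (∑ i : Fin n, (if (∑ j, X i j * b j) ≤ 0 ∧
            0 < (∑ j, X i j * v j) then (1:ℝ) else 0)) ≤ 1 := by
          rw [inv_mul_le_iff₀ hnR, mul_one]
          exact hsum
        simp only [sigHatL2]
        linarith
      have hT : ∀ ω, Real.sqrt n * (-(muHatL X b v (fun i => Y i ω))) /
          max (Real.sqrt (sigHatL2 X b v (fun i => Y i ω))) ε
            ≤ Tstat X Vu Vl hu hl ε b (fun i => Y i ω) := by
        intro ω
        refine le_trans ?_ (le_trans (le_max_right _ _) (le_max_right _ _))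
        exact Finset.le_sup' (fun v => Real.sqrt n * (-(muHatL X b v (fun i => Y i ω))) /
          max (Real.sqrt (sigHatL2 X b v (fun i => Y i ω))) ε) hv
      exact branch P hn W hmeas hind c hc1 hval
        (fun ω => muHatL X b v (fun i => Y i ω))
        (fun ω => sigHatL2 X b v (fun i => Y i ω))
        (fun ω => Tstat X Vu Vl hu hl ε b (fun i => Y i ω))
        hm hσ ε hε hT q γ Q hq0 ⟨hγ0, hγ1⟩ hEm hQC
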